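/- If two vertices u and v of a graph G have the property that the multiset of anonymous walks of length l starting at u differs from that starting at v (for some l), then no automorphism of G maps u to v. -/
import Mathlib



/-- First position at which vertex `w i` appears in `w`. -/
def anon {V : Type*} [DecidableEq V] {L : ℕ} (w : Fin (L + 1) → V) (i : Fin (L + 1)) :
    Fin (L + 1) :=
  (Finset.univ.filter (fun j => w j = w i)).min' ⟨i, by simp⟩

lemma anon_comp {V W : Type*} [DecidableEq V] [DecidableEq W] {L : ℕ}
    (g : V → W) (hg : Function.Injective g) (w : Fin (L + 1) → V) :
    anon (g ∘ w) = anon w := by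
  funext i
  unfold anon
  congr 1
  ext j
  simp [hg.eq_iff]

/-- Number of walks of length `l` in `G` starting at `x` whose anonymous sequence is `φ`. -/
def anonWalkCount {V : Type*} [Fintype V] [DecidableEq V] (G : SimpleGraph V)
    [DecidableRel G.Adj] (l : ℕ) (x : V) (φ : Fin (l + 1) → Fin (l + 1)) : ℕ :=
  (Finset.univ.filter (fun w : Fin (l + 1) → V =>
    w 0 = x ∧ (∀ i : Fin l, G.Adj (w i.castSucc) (w i.succ)) ∧ anon w = φ)).card

/-- If the multiset of anonymous walks of length `l` starting at `u`
differs from that starting at `v` (i.e. some anonymous sequence is realized by a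
different number of walks), then no automorphism of `G` maps `u` to `v`. -/
theorem no_automorphism_of_anon_distribution_ne {V : Type*} [Fintype V] [DecidableEq V]
    (G : SimpleGraph V) [DecidableRel G.Adj] (u v : V) (l : ℕ)
    (h : ∃ φ : Fin (l + 1) → Fin (l + 1), anonWalkCount G l u φ ≠ anonWalkCount G l v φ) :
    ∀ f : G ≃g G, f u ≠ v := by
  intro f hf
  obtain ⟨φ, hφ⟩ := h
  apply hφ
  unfold anonWalkCount
  apply Finset.card_bij (fun w _ => f ∘ w)
  · intro w hw
    simp only [Finset.mem_filter, Finset.mem_univ, true_and] at hw ⊢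
    obtain ⟨h0, hadj, hanon⟩ := hw
    refine ⟨by simp [h0, hf], fun i => ?_, ?_⟩
    · exact f.map_adj_iff.mpr (hadj i)
    · rw [anon_comp f f.injective w]; exact hanon
  · intro w1 h1 w2 h2 heq
    funext i
    exact f.injective (congrFun heq i)
  · intro w hw
    simp only [Finset.mem_filter, Finset.mem_univ, true_and] at hw ⊢
    obtain ⟨h0, hadj, hanon⟩ := hw
    refine ⟨f.symm ∘ w, ⟨?_, fun i => ?_, ?_⟩, ?_⟩
    · simp [h0, ← hf]
    · exact f.symm.map_adj_iff.mpr (hadj i)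
    · rw [anon_comp _ f.symm.injective w]; exact hanon
    · funext i; simp
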